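/- For trace-zero Hermitian matrices u, v, the rescaled Hilbert distance satisfies lim_{λ→0⁺} d_H(exp(λu), exp(λv))/λ = λ_max(v-u) - λ_min(v-u). -/

import Mathlib

set_option maxHeartbeats 1600000

open scoped ComplexOrder
open Matrix NormedSpace

/-- `Mmat A B = inf {t > 0 : t • B - A` positive definite `}`. -/
noncomputable def Mmat {n : ℕ} (A B : Matrix (Fin n) (Fin n) ℂ) : ℝ :=
  sInf {t : ℝ | 0 < t ∧ (t • B - A).PosDef}

/-- The Hilbert pseudo-metric `d_H(A,B) = log (M(A,B) · M(B,A))`. -/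
noncomputable def dHilbert {n : ℕ} (A B : Matrix (Fin n) (Fin n) ℂ) : ℝ :=
  Real.log (Mmat A B * Mmat B A)


namespace HilbertAux

variable {n : ℕ}

lemma quad_conj (U : Matrix (Fin n) (Fin n) ℂ)
    (d : Fin n → ℂ) (x : Fin n → ℂ) :
    star x ⬝ᵥ ((U * Matrix.diagonal d * star U) *ᵥ x)
      = ∑ i, d i * (Complex.normSq ((star U *ᵥ x) i) : ℂ) := by
  have h1 : (U * Matrix.diagonal d * star U) *ᵥ x
      = U *ᵥ (Matrix.diagonal d *ᵥ (star U *ᵥ x)) := by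
    simp [Matrix.mulVec_mulVec, Matrix.mul_assoc]
  rw [h1, Matrix.dotProduct_mulVec]
  have h2 : star x ᵥ* U = star (star U *ᵥ x) := by
    rw [Matrix.star_mulVec, Matrix.star_eq_conjTranspose, Matrix.conjTranspose_conjTranspose]
  rw [h2]
  simp only [dotProduct, Matrix.mulVec_diagonal, Pi.star_apply]
  refine Finset.sum_congr rfl fun i _ => ?_
  simp only [Complex.star_def, Complex.normSq_eq_conj_mul_self]
  ring

end HilbertAux

namespace HilbertAux

variable {n : ℕ} {w : Matrix (Fin n) (Fin n) ℂ}

lemma exp_smul_eq (hw : w.IsHermitian) (l : ℝ) :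
    NormedSpace.exp (l • w) = (hw.eigenvectorUnitary : Matrix (Fin n) (Fin n) ℂ)
      * Matrix.diagonal (fun i => (Real.exp (l * hw.eigenvalues i) : ℂ))
      * star (hw.eigenvectorUnitary : Matrix (Fin n) (Fin n) ℂ) := by
  set U : Matrix (Fin n) (Fin n) ℂ := (hw.eigenvectorUnitary : Matrix (Fin n) (Fin n) ℂ) with hU
  have hUunit : IsUnit U :=
    ⟨⟨U, star U, Unitary.mul_star_self_of_mem hw.eigenvectorUnitary.2,
      Unitary.star_mul_self_of_mem hw.eigenvectorUnitary.2⟩, rfl⟩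
  have hUinv : U⁻¹ = star U :=
    Matrix.inv_eq_left_inv (Unitary.star_mul_self_of_mem hw.eigenvectorUnitary.2)
  have hsm : l • w = U * Matrix.diagonal (fun i => ((l * hw.eigenvalues i : ℝ) : ℂ)) * star U := by
    conv_lhs => rw [hw.spectral_theorem, Unitary.conjStarAlgAut_apply]
    have hd : l • Matrix.diagonal ((RCLike.ofReal ∘ hw.eigenvalues : Fin n → ℂ))
        = Matrix.diagonal (fun i => ((l * hw.eigenvalues i : ℝ) : ℂ)) := by
      ext i j
      simp [Matrix.diagonal_apply, Function.comp, apply_ite (l • ·), Complex.real_smul]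
    rw [← smul_mul_assoc, ← mul_smul_comm, hd]
  rw [hsm, ← hUinv, Matrix.exp_conj U _ hUunit, Matrix.exp_diagonal]
  have hfun : (NormedSpace.exp fun i => ((l * hw.eigenvalues i : ℝ) : ℂ))
      = fun i => ((Real.exp (l * hw.eigenvalues i) : ℝ) : ℂ) := by
    funext i
    rw [Pi.coe_exp, ← Complex.exp_eq_exp_ℂ, Complex.ofReal_exp]
  rw [hfun, hUinv]

end HilbertAux

namespace HilbertAux

variable {n : ℕ} {w : Matrix (Fin n) (Fin n) ℂ}

lemma quad_exp (hw : w.IsHermitian) (l : ℝ) (x : Fin n → ℂ) :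
    star x ⬝ᵥ (NormedSpace.exp (l • w) *ᵥ x)
      = ((∑ i, Real.exp (l * hw.eigenvalues i)
          * Complex.normSq ((star (hw.eigenvectorUnitary : Matrix (Fin n) (Fin n) ℂ) *ᵥ x) i) : ℝ) : ℂ) := by
  rw [exp_smul_eq hw l, quad_conj]
  push_cast
  rfl

lemma quad_w (hw : w.IsHermitian) (x : Fin n → ℂ) :
    star x ⬝ᵥ (w *ᵥ x)
      = ((∑ i, hw.eigenvalues i
          * Complex.normSq ((star (hw.eigenvectorUnitary : Matrix (Fin n) (Fin n) ℂ) *ᵥ x) i) : ℝ) : ℂ) := by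
  conv_lhs => rw [hw.spectral_theorem, Unitary.conjStarAlgAut_apply]
  rw [quad_conj]
  push_cast
  rfl

lemma quad_one (hw : w.IsHermitian) (x : Fin n → ℂ) :
    (∑ i, Complex.normSq ((star (hw.eigenvectorUnitary : Matrix (Fin n) (Fin n) ℂ) *ᵥ x) i) : ℝ)
      = ∑ i, Complex.normSq (x i) := by
  set U : Matrix (Fin n) (Fin n) ℂ := (hw.eigenvectorUnitary : Matrix (Fin n) (Fin n) ℂ) with hU
  have h1 : U * Matrix.diagonal (fun _ => (1:ℂ)) * star U = 1 := by
    rw [Matrix.diagonal_one, mul_one]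
    exact Unitary.mul_star_self_of_mem hw.eigenvectorUnitary.2
  have h2 := quad_conj U (fun _ => (1:ℂ)) x
  rw [h1, Matrix.one_mulVec] at h2
  have h3 : star x ⬝ᵥ x = ((∑ i, Complex.normSq (x i) : ℝ) : ℂ) := by
    simp [dotProduct, Complex.star_def, Complex.normSq_eq_conj_mul_self]
  rw [h3] at h2
  have := h2.symm
  simp only [one_mul] at this
  exact_mod_cast this

end HilbertAux

namespace HilbertAux

variable {n : ℕ} {w : Matrix (Fin n) (Fin n) ℂ}

lemma quad_exp_est (hw : w.IsHermitian) {K l : ℝ} (hK : ∀ i, |hw.eigenvalues i| ≤ K)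
    (hl : 0 ≤ l) (hlK : l * K ≤ 1) (x : Fin n → ℂ) :
    |(star x ⬝ᵥ (NormedSpace.exp (l • w) *ᵥ x)).re
      - ((∑ i, Complex.normSq (x i)) + l * (star x ⬝ᵥ (w *ᵥ x)).re)|
      ≤ l^2 * K^2 * (∑ i, Complex.normSq (x i)) := by
  rw [quad_exp hw l x, quad_w hw x, Complex.ofReal_re, Complex.ofReal_re, ← quad_one hw x]
  set y : Fin n → ℂ := star ((hw.eigenvectorUnitary : Matrix (Fin n) (Fin n) ℂ)) *ᵥ x with hy
  set c : Fin n → ℝ := fun i => Complex.normSq (y i) with hc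
  have hkey : (∑ i, Real.exp (l * hw.eigenvalues i) * c i)
      - ((∑ i, c i) + l * ∑ i, hw.eigenvalues i * c i)
      = ∑ i, (Real.exp (l * hw.eigenvalues i) - 1 - l * hw.eigenvalues i) * c i := by
    rw [Finset.mul_sum, ← Finset.sum_add_distrib, ← Finset.sum_sub_distrib]
    congr 1; funext i; ring
  rw [hkey]
  calc |∑ i, (Real.exp (l * hw.eigenvalues i) - 1 - l * hw.eigenvalues i) * c i|
      ≤ ∑ i, |(Real.exp (l * hw.eigenvalues i) - 1 - l * hw.eigenvalues i) * c i| :=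
        Finset.abs_sum_le_sum_abs _ _
    _ ≤ ∑ i, l^2 * K^2 * c i := by
        refine Finset.sum_le_sum fun i _ => ?_
        rw [abs_mul, abs_of_nonneg (Complex.normSq_nonneg _)]
        have h1 : |l * hw.eigenvalues i| ≤ 1 := by
          rw [abs_mul, abs_of_nonneg hl]
          calc l * |hw.eigenvalues i| ≤ l * K := by
                rcases eq_or_lt_of_le hl with h | h
                · simp [← h]
                · exact (mul_le_mul_iff_right₀ h).mpr (hK i)
            _ ≤ 1 := hlK
        have h2 := Real.abs_exp_sub_one_sub_id_le h1
        have h3 : (l * hw.eigenvalues i)^2 ≤ l^2 * K^2 := by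
          have := hK i
          have := abs_nonneg (hw.eigenvalues i)
          rw [mul_pow]
          have h5 : (hw.eigenvalues i)^2 ≤ K^2 := by
            rw [← sq_abs]
            exact pow_le_pow_left₀ (abs_nonneg _) (hK i) 2
          exact mul_le_mul_of_nonneg_left h5 (sq_nonneg l)
        have h4 : (0:ℝ) ≤ c i := Complex.normSq_nonneg _
        calc |Real.exp (l * hw.eigenvalues i) - 1 - l * hw.eigenvalues i| * c i
            ≤ (l * hw.eigenvalues i)^2 * c i := mul_le_mul_of_nonneg_right h2 h4
          _ ≤ l^2 * K^2 * c i := mul_le_mul_of_nonneg_right h3 h4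
    _ = l^2 * K^2 * ∑ i, c i := (Finset.mul_sum _ _ _).symm

lemma quad_w_abs (hw : w.IsHermitian) {K : ℝ} (hK : ∀ i, |hw.eigenvalues i| ≤ K)
    (x : Fin n → ℂ) :
    |(star x ⬝ᵥ (w *ᵥ x)).re| ≤ K * (∑ i, Complex.normSq (x i)) := by
  rw [quad_w hw x, Complex.ofReal_re, ← quad_one hw x]
  set y : Fin n → ℂ := star ((hw.eigenvectorUnitary : Matrix (Fin n) (Fin n) ℂ)) *ᵥ x with hy
  calc |∑ i, hw.eigenvalues i * Complex.normSq (y i)|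
      ≤ ∑ i, |hw.eigenvalues i * Complex.normSq (y i)| := Finset.abs_sum_le_sum_abs _ _
    _ ≤ ∑ i, K * Complex.normSq (y i) := by
        refine Finset.sum_le_sum fun i _ => ?_
        rw [abs_mul, abs_of_nonneg (Complex.normSq_nonneg _)]
        exact mul_le_mul_of_nonneg_right (hK i) (Complex.normSq_nonneg _)
    _ = K * ∑ i, Complex.normSq (y i) := (Finset.mul_sum _ _ _).symm

lemma quad_w_bounds (hw : w.IsHermitian) (hn : 0 < n) (x : Fin n → ℂ) :
    (⨅ i, hw.eigenvalues i) * (∑ i, Complex.normSq (x i)) ≤ (star x ⬝ᵥ (w *ᵥ x)).re ∧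
    (star x ⬝ᵥ (w *ᵥ x)).re ≤ (⨆ i, hw.eigenvalues i) * (∑ i, Complex.normSq (x i)) := by
  have : Nonempty (Fin n) := ⟨⟨0, hn⟩⟩
  rw [quad_w hw x, Complex.ofReal_re, ← quad_one hw x]
  set y : Fin n → ℂ := star ((hw.eigenvectorUnitary : Matrix (Fin n) (Fin n) ℂ)) *ᵥ x with hy
  constructor
  · rw [Finset.mul_sum]
    refine Finset.sum_le_sum fun i _ => ?_
    exact mul_le_mul_of_nonneg_right (ciInf_le (Finite.bddBelow_range _) i)
      (Complex.normSq_nonneg _)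
  · rw [Finset.mul_sum]
    refine Finset.sum_le_sum fun i _ => ?_
    exact mul_le_mul_of_nonneg_right (le_ciSup (Finite.bddAbove_range _) i)
      (Complex.normSq_nonneg _)

end HilbertAux

namespace HilbertAux

variable {n : ℕ} {w : Matrix (Fin n) (Fin n) ℂ}

lemma exists_quad_eq (hw : w.IsHermitian) (i₀ : Fin n) :
    ∃ x : Fin n → ℂ, x ≠ 0 ∧
      (star x ⬝ᵥ (w *ᵥ x)).re = hw.eigenvalues i₀ * (∑ i, Complex.normSq (x i)) := by
  refine ⟨⇑(hw.eigenvectorBasis i₀), ?_, ?_⟩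
  · intro h
    exact hw.eigenvectorBasis.orthonormal.ne_zero i₀ (by simpa using h)
  · rw [hw.mulVec_eigenvectorBasis]
    have h1 : star (⇑(hw.eigenvectorBasis i₀)) ⬝ᵥ (hw.eigenvalues i₀ • ⇑(hw.eigenvectorBasis i₀))
        = hw.eigenvalues i₀ • (star (⇑(hw.eigenvectorBasis i₀)) ⬝ᵥ ⇑(hw.eigenvectorBasis i₀)) := by
      rw [dotProduct_smul]
    rw [h1]
    have h3 : star (⇑(hw.eigenvectorBasis i₀)) ⬝ᵥ ⇑(hw.eigenvectorBasis i₀)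
        = ((∑ i, Complex.normSq (hw.eigenvectorBasis i₀ i) : ℝ) : ℂ) := by
      simp [dotProduct, Complex.star_def, Complex.normSq_eq_conj_mul_self]
    rw [h3, Complex.real_smul, ← Complex.ofReal_mul, Complex.ofReal_re]

end HilbertAux

namespace HilbertAux

lemma scalar_nonneg {P qv rv l K : ℝ} (hP : 0 ≤ P)
    (h1 : |qv - (P + l * rv)| ≤ l^2 * K^2 * P) (h2 : |rv| ≤ K * P)
    (hl : 0 ≤ l) (hK0 : 0 < K) (hlK2 : l * K ≤ 1/2) : 0 ≤ qv := by
  obtain ⟨h1a, _⟩ := abs_le.mp h1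
  obtain ⟨h2a, _⟩ := abs_le.mp h2
  have h3 : l * -(K*P) ≤ l * rv := mul_le_mul_of_nonneg_left h2a hl
  have h4 : (l*K)*(l*K) ≤ (1/2)*(1/2) := mul_le_mul hlK2 hlK2 (by positivity) (by norm_num)
  have h5 : (l*K)*P ≤ (1/2)*P := mul_le_mul_of_nonneg_right hlK2 hP
  have h6 : ((l*K)*(l*K))*P ≤ ((1/2)*(1/2))*P := mul_le_mul_of_nonneg_right h4 hP
  linarith only [h1a, h3, h5, h6, hP]

lemma scalar_upper {P qu qv ru rv l K s c ε : ℝ} (hP : 0 < P)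
    (hu1 : |qu - (P + l * ru)| ≤ l^2 * K^2 * P)
    (hv1 : |qv - (P + l * rv)| ≤ l^2 * K^2 * P)
    (hru : |ru| ≤ K * P) (hrv : |rv| ≤ K * P)
    (hdiff : c * P ≤ rv - ru) (hs : s = -c + ε)
    (hs_abs : |s| ≤ K) (hε : 0 < ε) (hl : 0 < l) (hK1 : 1 ≤ K)
    (hlK2 : l * K ≤ 1/2) (hlE : l * (8*K^4) ≤ ε) :
    0 < Real.exp (l * s) * qv - qu := by
  have hl0' : (0:ℝ) ≤ l := hl.le
  have hK0 : (0:ℝ) < K := lt_of_lt_of_le one_pos hK1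
  have hl_le : l ≤ 1/2 := by
    have := mul_le_mul_of_nonneg_left hK1 hl.le
    linarith only [this, hlK2]
  obtain ⟨hua, hub⟩ := abs_le.mp hu1
  obtain ⟨hva, hvb⟩ := abs_le.mp hv1
  obtain ⟨hru1, hru2⟩ := abs_le.mp hru
  obtain ⟨hrv1, hrv2⟩ := abs_le.mp hrv
  have hqv0 : 0 ≤ qv := scalar_nonneg hP.le hv1 hrv hl0' hK0 hlK2
  have ht1 : 1 + l * s ≤ Real.exp (l * s) := by
    have := Real.add_one_le_exp (l * s); linarith
  have hcoef0 : 0 ≤ 1 + l * s := by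
    have h6 : l * -K ≤ l * s := mul_le_mul_of_nonneg_left (abs_le.mp hs_abs).1 hl0'
    linarith
  have hmono : (1 + l * s) * qv ≤ Real.exp (l * s) * qv :=
    mul_le_mul_of_nonneg_right ht1 hqv0
  have hstep : (1 + l * s) * (P + l * rv - l^2*K^2*P) ≤ (1 + l * s) * qv :=
    mul_le_mul_of_nonneg_left (by linarith) hcoef0
  have hexp : (1 + l * s) * (P + l * rv - l^2*K^2*P) - (P + l * ru + l^2*K^2*P)
      = l * ((rv - ru) + s * P) + l^2 * (s * rv - 2*(K^2*P)) - l^3 * (s * (K^2*P)) := by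
    ring
  have hE1 : ε * P ≤ (rv - ru) + s * P := by
    rw [hs]; linarith only [hdiff]
  have h_a : l * (ε * P) ≤ l * ((rv - ru) + s * P) := mul_le_mul_of_nonneg_left hE1 hl0'
  have h_b : -(K * (K * P)) ≤ s * rv := by
    have h7 : |s * rv| ≤ K * (K * P) := by
      rw [abs_mul]
      exact mul_le_mul hs_abs hrv (abs_nonneg _) hK0.le
    have := neg_abs_le (s * rv)
    linarith
  have h_c : l^2 * (-(K * (K * P)) - 2*(K^2*P)) ≤ l^2 * (s * rv - 2*(K^2*P)) :=
    mul_le_mul_of_nonneg_left (by linarith) (sq_nonneg l)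
  have h_d : l^3 * (s * (K^2*P)) ≤ l^3 * (K * (K^2*P)) := by
    apply mul_le_mul_of_nonneg_left _ (by positivity)
    exact mul_le_mul_of_nonneg_right ((le_abs_self s).trans hs_abs) (by positivity)
  have h_e : l^3 * (K * (K^2*P)) ≤ l^2 * (K * (K^2*P)) := by
    apply mul_le_mul_of_nonneg_right _ (by positivity)
    exact pow_le_pow_of_le_one hl0' (by linarith) (by norm_num)
  have h_g : (l * (8*K^4)) * (l * P) ≤ ε * (l * P) :=
    mul_le_mul_of_nonneg_right hlE (by positivity)
  have h_h : K^2 * (l^2 * P) ≤ K^4 * (l^2 * P) :=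
    mul_le_mul_of_nonneg_right (pow_le_pow_right₀ hK1 (by norm_num)) (by positivity)
  have h_i : K^3 * (l^2 * P) ≤ K^4 * (l^2 * P) :=
    mul_le_mul_of_nonneg_right (pow_le_pow_right₀ hK1 (by norm_num)) (by positivity)
  have h_j : 0 < K^4 * (l^2 * P) := by positivity
  linarith only [hmono, hstep, hexp, h_a, h_c, h_d, h_e, h_g, h_h, h_i, h_j, hub]

lemma scalar_lower {P qu qv ru rv l K s' c ε t'' : ℝ} (hP : 0 < P)
    (hu1 : |qu - (P + l * ru)| ≤ l^2 * K^2 * P)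
    (hv1 : |qv - (P + l * rv)| ≤ l^2 * K^2 * P)
    (hru : |ru| ≤ K * P) (hrv : |rv| ≤ K * P)
    (hdiff : rv - ru ≤ c * P) (hs' : s' = -c - ε)
    (hs'_abs : |s'| ≤ K) (hε : 0 < ε) (hl : 0 < l) (hK1 : 1 ≤ K)
    (hlK2 : l * K ≤ 1/2) (hlE : l * (8*K^4) ≤ ε)
    (hcon : t'' ≤ Real.exp (l * s'))
    (hq : 0 < t'' * qv - qu) : False := by
  have hl0' : (0:ℝ) ≤ l := hl.le
  have hK0 : (0:ℝ) < K := lt_of_lt_of_le one_pos hK1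
  have hl_le : l ≤ 1/2 := by
    have := mul_le_mul_of_nonneg_left hK1 hl.le
    linarith only [this, hlK2]
  have hlK1 : l * K ≤ 1 := by linarith
  obtain ⟨hua, hub⟩ := abs_le.mp hu1
  obtain ⟨hva, hvb⟩ := abs_le.mp hv1
  obtain ⟨hru1, hru2⟩ := abs_le.mp hru
  obtain ⟨hrv1, hrv2⟩ := abs_le.mp hrv
  have hqv0 : 0 ≤ qv := scalar_nonneg hP.le hv1 hrv hl0' hK0 hlK2
  have hls'1 : |l * s'| ≤ 1 := by
    rw [abs_mul, abs_of_nonneg hl0']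
    calc l * |s'| ≤ l * K := mul_le_mul_of_nonneg_left hs'_abs hl0'
      _ ≤ 1 := hlK1
  have ht'2 : Real.exp (l * s') ≤ 1 + l * s' + (l * s')^2 := by
    have := abs_le.mp (Real.abs_exp_sub_one_sub_id_le hls'1)
    linarith [this.2]
  have hcoef0 : 0 ≤ 1 + l * s' + (l * s')^2 := by
    have h6 : l * -K ≤ l * s' := mul_le_mul_of_nonneg_left (abs_le.mp hs'_abs).1 hl0'
    linarith only [h6, hlK2, sq_nonneg (l * s')]
  have hchain1 : t'' * qv ≤ Real.exp (l * s') * qv :=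
    mul_le_mul_of_nonneg_right hcon hqv0
  have hchain2 : Real.exp (l * s') * qv
      ≤ (1 + l * s' + (l * s')^2) * (P + l * rv + l^2*K^2*P) :=
    mul_le_mul ht'2 (by linarith) hqv0 hcoef0
  have hexp' : (1 + l * s' + (l * s')^2) * (P + l * rv + l^2*K^2*P) - (P + l * ru - l^2*K^2*P)
      = l * ((rv - ru) + s' * P)
        + l^2 * (2*(K^2*P) + s' * rv + s'^2 * P)
        + l^3 * (s' * (K^2*P) + s'^2 * rv)
        + l^4 * (s'^2 * (K^2*P)) := by
    ring
  have hE1 : (rv - ru) + s' * P ≤ -(ε * P) := by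
    rw [hs']; linarith only [hdiff]
  have h_a : l * ((rv - ru) + s' * P) ≤ l * -(ε * P) := mul_le_mul_of_nonneg_left hE1 hl0'
  have h_b : s' * rv ≤ K * (K * P) := by
    have h7 : |s' * rv| ≤ K * (K * P) := by
      rw [abs_mul]
      exact mul_le_mul hs'_abs hrv (abs_nonneg _) hK0.le
    linarith [le_abs_self (s' * rv)]
  have h_sq : s'^2 ≤ K^2 := by
    rw [← sq_abs]
    exact pow_le_pow_left₀ (abs_nonneg _) hs'_abs 2
  have h_c : l^2 * (2*(K^2*P) + s' * rv + s'^2 * P) ≤ l^2 * (4 * (K^2*P)) := by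
    apply mul_le_mul_of_nonneg_left _ (sq_nonneg l)
    have h8 : s'^2 * P ≤ K^2 * P := mul_le_mul_of_nonneg_right h_sq hP.le
    linarith only [h_b, h8]
  have h_d : l^3 * (s' * (K^2*P) + s'^2 * rv) ≤ l^3 * (2 * (K^3*P)) := by
    apply mul_le_mul_of_nonneg_left _ (by positivity)
    have h9 : s' * (K^2*P) ≤ K * (K^2*P) :=
      mul_le_mul_of_nonneg_right ((le_abs_self s').trans hs'_abs) (by positivity)
    have h10 : s'^2 * rv ≤ K^2 * (K * P) := by
      calc s'^2 * rv ≤ s'^2 * (K * P) := mul_le_mul_of_nonneg_left hrv2 (sq_nonneg s')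
        _ ≤ K^2 * (K * P) := mul_le_mul_of_nonneg_right h_sq (by positivity)
    linarith only [h9, h10]
  have h_e : l^4 * (s'^2 * (K^2*P)) ≤ l^4 * (K^2 * (K^2*P)) := by
    apply mul_le_mul_of_nonneg_left _ (by positivity)
    exact mul_le_mul_of_nonneg_right h_sq (by positivity)
  have hl32 : l^3 ≤ l^2 := pow_le_pow_of_le_one hl0' (by linarith) (by norm_num)
  have hl42 : l^4 ≤ l^2 := pow_le_pow_of_le_one hl0' (by linarith) (by norm_num)
  have h_f : l^3 * (2 * (K^3*P)) ≤ l^2 * (2 * (K^3*P)) :=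
    mul_le_mul_of_nonneg_right hl32 (by positivity)
  have h_g : l^4 * (K^2 * (K^2*P)) ≤ l^2 * (K^2 * (K^2*P)) :=
    mul_le_mul_of_nonneg_right hl42 (by positivity)
  have h_h : (l * (8*K^4)) * (l * P) ≤ ε * (l * P) :=
    mul_le_mul_of_nonneg_right hlE (by positivity)
  have h_i : K^2 * (l^2 * P) ≤ K^4 * (l^2 * P) :=
    mul_le_mul_of_nonneg_right (pow_le_pow_right₀ hK1 (by norm_num)) (by positivity)
  have h_j : K^3 * (l^2 * P) ≤ K^4 * (l^2 * P) :=
    mul_le_mul_of_nonneg_right (pow_le_pow_right₀ hK1 (by norm_num)) (by positivity)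
  have h_k : 0 ≤ ε * (l * P) := mul_nonneg hε.le (by positivity)
  linarith only [hq, hchain1, hchain2, hexp', h_a, h_c, h_d, h_e, h_f, h_g, h_h, h_i, h_j, h_k, hua]


end HilbertAux

namespace HilbertAux

variable {n : ℕ}

lemma herm_smul_sub {A B : Matrix (Fin n) (Fin n) ℂ} (hA : A.IsHermitian)
    (hB : B.IsHermitian) (t : ℝ) : (t • B - A).IsHermitian := by
  rw [Matrix.IsHermitian, Matrix.conjTranspose_sub, Matrix.conjTranspose_smul, star_trivial,
    hA.eq, hB.eq]

lemma quad_smul_sub (A B : Matrix (Fin n) (Fin n) ℂ) (t : ℝ) (x : Fin n → ℂ)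
    {sa sb : ℝ} (ha : star x ⬝ᵥ (A *ᵥ x) = (sa : ℂ)) (hb : star x ⬝ᵥ (B *ᵥ x) = (sb : ℂ)) :
    star x ⬝ᵥ ((t • B - A) *ᵥ x) = ((t * sb - sa : ℝ) : ℂ) := by
  rw [Matrix.sub_mulVec, Matrix.smul_mulVec, dotProduct_sub,
    dotProduct_smul, ha, hb]
  push_cast
  rw [Complex.real_smul]
  try ring

lemma sum_normSq_pos {x : Fin n → ℂ} (hx : x ≠ 0) :
    0 < ∑ i, Complex.normSq (x i) := by
  obtain ⟨i, hi⟩ := Function.ne_iff.mp hx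
  refine Finset.sum_pos' (fun j _ => Complex.normSq_nonneg _) ⟨i, Finset.mem_univ i, ?_⟩
  exact Complex.normSq_pos.mpr hi

lemma Mmat_sandwich (u v : Matrix (Fin n) (Fin n) ℂ)
    (hu : u.IsHermitian) (hv : v.IsHermitian) (c : ℝ)
    (hlb : ∀ x : Fin n → ℂ, c * (∑ i, Complex.normSq (x i)) ≤ (star x ⬝ᵥ ((v - u) *ᵥ x)).re)
    (hwit : ∃ x : Fin n → ℂ, x ≠ 0 ∧
      (star x ⬝ᵥ ((v - u) *ᵥ x)).re ≤ c * (∑ i, Complex.normSq (x i)))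
    {ε : ℝ} (hε : 0 < ε) :
    ∀ᶠ l in nhdsWithin (0:ℝ) (Set.Ioi 0),
      Real.exp (l * (-c - ε)) ≤ Mmat (NormedSpace.exp (l • u)) (NormedSpace.exp (l • v)) ∧
      Mmat (NormedSpace.exp (l • u)) (NormedSpace.exp (l • v)) ≤ Real.exp (l * (-c + ε)) := by
  classical
  set K : ℝ := 1 + |c| + ε + (∑ i, |hu.eigenvalues i|) + (∑ i, |hv.eigenvalues i|) with hK
  have hsum_u : ∀ i, |hu.eigenvalues i| ≤ ∑ j, |hu.eigenvalues j| :=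
    fun i => Finset.single_le_sum (f := fun j => |hu.eigenvalues j|)
      (fun j _ => abs_nonneg _) (Finset.mem_univ i)
  have hsum_v : ∀ i, |hv.eigenvalues i| ≤ ∑ j, |hv.eigenvalues j| :=
    fun i => Finset.single_le_sum (f := fun j => |hv.eigenvalues j|)
      (fun j _ => abs_nonneg _) (Finset.mem_univ i)
  have hsum_u0 : 0 ≤ ∑ j, |hu.eigenvalues j| := Finset.sum_nonneg fun j _ => abs_nonneg _
  have hsum_v0 : 0 ≤ ∑ j, |hv.eigenvalues j| := Finset.sum_nonneg fun j _ => abs_nonneg _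
  have hK1 : 1 ≤ K := by
    have := abs_nonneg c
    simp only [hK]; linarith
  have hK0 : 0 < K := lt_of_lt_of_le one_pos hK1
  have hKu : ∀ i, |hu.eigenvalues i| ≤ K := by
    intro i
    have := hsum_u i
    have := abs_nonneg c
    simp only [hK]; linarith
  have hKv : ∀ i, |hv.eigenvalues i| ≤ K := by
    intro i
    have := hsum_v i
    have := abs_nonneg c
    simp only [hK]; linarith
  have hKc : |c| + ε ≤ K := by simp only [hK]; linarith
  set δ : ℝ := min (1 / (2 * K)) (ε / (8 * K ^ 4)) with hδ
  have hδ0 : 0 < δ := by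
    apply lt_min
    · positivity
    · positivity
  filter_upwards [Ioo_mem_nhdsGT_of_mem (Set.mem_Ico.mpr ⟨le_refl (0:ℝ), hδ0⟩)]
  rintro l ⟨hl0, hlδ⟩
  have hl0' : (0:ℝ) ≤ l := le_of_lt hl0
  have hlK2 : l * K ≤ 1 / 2 := by
    have h := lt_of_lt_of_le hlδ (min_le_left _ _)
    rw [lt_div_iff₀ (by positivity)] at h
    nlinarith
  have hlK1 : l * K ≤ 1 := hlK2.trans (by norm_num)
  have hlE : l * (8 * K ^ 4) ≤ ε := by
    have h := lt_of_lt_of_le hlδ (min_le_right _ _)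
    rw [lt_div_iff₀ (by positivity)] at h
    linarith
  set A := NormedSpace.exp (l • u) with hA
  set B := NormedSpace.exp (l • v) with hB
  set s : ℝ := -c + ε with hs
  set s' : ℝ := -c - ε with hs'
  have hs_abs : |s| ≤ K := by
    rw [hs]
    calc |(-c + ε)| ≤ |(-c)| + |ε| := abs_add_le _ _
      _ = |c| + ε := by rw [abs_neg, abs_of_pos hε]
      _ ≤ K := hKc
  have hs'_abs : |s'| ≤ K := by
    rw [hs']
    calc |(-c - ε)| = |(-c) + (-ε)| := by ring_nf
      _ ≤ |(-c)| + |(-ε)| := abs_add_le _ _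
      _ = |c| + ε := by rw [abs_neg, abs_neg, abs_of_pos hε]
      _ ≤ K := hKc
  have hluh : (l • u).IsHermitian := by
    rw [Matrix.IsHermitian, Matrix.conjTranspose_smul, star_trivial, hu.eq]
  have hlvh : (l • v).IsHermitian := by
    rw [Matrix.IsHermitian, Matrix.conjTranspose_smul, star_trivial, hv.eq]
  have hAh : A.IsHermitian := Matrix.IsHermitian.exp hluh
  have hBh : B.IsHermitian := Matrix.IsHermitian.exp hlvh
  have hreprA : ∀ x : Fin n → ℂ,
      star x ⬝ᵥ (A *ᵥ x) = (((star x ⬝ᵥ (A *ᵥ x)).re : ℝ) : ℂ) := by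
    intro x
    rw [hA, quad_exp hu l x, Complex.ofReal_re]
  have hreprB : ∀ x : Fin n → ℂ,
      star x ⬝ᵥ (B *ᵥ x) = (((star x ⬝ᵥ (B *ᵥ x)).re : ℝ) : ℂ) := by
    intro x
    rw [hB, quad_exp hv l x, Complex.ofReal_re]
  have hestA : ∀ x : Fin n → ℂ,
      |(star x ⬝ᵥ (A *ᵥ x)).re - ((∑ i, Complex.normSq (x i)) + l * (star x ⬝ᵥ (u *ᵥ x)).re)|
        ≤ l^2 * K^2 * (∑ i, Complex.normSq (x i)) := by
    intro x; rw [hA]; exact quad_exp_est hu hKu hl0' hlK1 x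
  have hestB : ∀ x : Fin n → ℂ,
      |(star x ⬝ᵥ (B *ᵥ x)).re - ((∑ i, Complex.normSq (x i)) + l * (star x ⬝ᵥ (v *ᵥ x)).re)|
        ≤ l^2 * K^2 * (∑ i, Complex.normSq (x i)) := by
    intro x; rw [hB]; exact quad_exp_est hv hKv hl0' hlK1 x
  have habsu : ∀ x : Fin n → ℂ,
      |(star x ⬝ᵥ (u *ᵥ x)).re| ≤ K * (∑ i, Complex.normSq (x i)) := fun x => quad_w_abs hu hKu x
  have habsv : ∀ x : Fin n → ℂ,
      |(star x ⬝ᵥ (v *ᵥ x)).re| ≤ K * (∑ i, Complex.normSq (x i)) := fun x => quad_w_abs hv hKv x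
  have hmem : Real.exp (l * s) ∈ {t : ℝ | 0 < t ∧ (t • B - A).PosDef} := by
    refine ⟨Real.exp_pos _, Matrix.posDef_iff_dotProduct_mulVec.mpr ⟨herm_smul_sub hAh hBh _, ?_⟩⟩
    intro x hx
    rw [quad_smul_sub A B _ x (hreprA x) (hreprB x), Complex.zero_lt_real]
    have hdiff : c * (∑ i, Complex.normSq (x i))
        ≤ (star x ⬝ᵥ (v *ᵥ x)).re - (star x ⬝ᵥ (u *ᵥ x)).re := by
      have h := hlb x
      rwa [Matrix.sub_mulVec, dotProduct_sub, Complex.sub_re] at h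
    exact scalar_upper (sum_normSq_pos hx) (hestA x) (hestB x) (habsu x) (habsv x)
      hdiff hs hs_abs hε hl0 hK1 hlK2 hlE
  obtain ⟨x₀, hx₀ne, hwle⟩ := hwit
  have hlower : ∀ t'' ∈ {t : ℝ | 0 < t ∧ (t • B - A).PosDef}, Real.exp (l * s') ≤ t'' := by
    rintro t'' ⟨ht''0, ht''PD⟩
    by_contra hcon
    push_neg at hcon
    have hPDq := ht''PD.dotProduct_mulVec_pos hx₀ne
    rw [quad_smul_sub A B _ x₀ (hreprA x₀) (hreprB x₀), Complex.zero_lt_real] at hPDq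
    have hdiff : (star x₀ ⬝ᵥ (v *ᵥ x₀)).re - (star x₀ ⬝ᵥ (u *ᵥ x₀)).re
        ≤ c * (∑ i, Complex.normSq (x₀ i)) := by
      have h := hwle
      rwa [Matrix.sub_mulVec, dotProduct_sub, Complex.sub_re] at h
    exact scalar_lower (sum_normSq_pos hx₀ne) (hestA x₀) (hestB x₀) (habsu x₀) (habsv x₀)
      hdiff hs' hs'_abs hε hl0 hK1 hlK2 hlE hcon.le hPDq
  constructor
  · exact le_csInf ⟨_, hmem⟩ hlower
  · exact csInf_le ⟨0, fun y hy => hy.1.le⟩ hmem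

lemma tendsto_log_div_of_sandwich {f : ℝ → ℝ} {C : ℝ}
    (h : ∀ ε : ℝ, 0 < ε → ∀ᶠ l in nhdsWithin (0:ℝ) (Set.Ioi 0),
      Real.exp (l * (C - ε)) ≤ f l ∧ f l ≤ Real.exp (l * (C + ε))) :
    Filter.Tendsto (fun l => Real.log (f l) / l) (nhdsWithin 0 (Set.Ioi 0)) (nhds C) := by
  rw [Metric.tendsto_nhds]
  intro ε hε
  filter_upwards [h (ε/2) (half_pos hε), self_mem_nhdsWithin] with l hl hlmem
  obtain ⟨h1, h2⟩ := hl
  have hl0 : (0:ℝ) < l := hlmem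
  have hfpos : 0 < f l := lt_of_lt_of_le (Real.exp_pos _) h1
  have hlog1 : l * (C - ε/2) ≤ Real.log (f l) := by
    calc l * (C - ε/2) = Real.log (Real.exp (l * (C - ε/2))) := (Real.log_exp _).symm
      _ ≤ Real.log (f l) := (Real.log_le_log_iff (Real.exp_pos _) hfpos).mpr h1
  have hlog2 : Real.log (f l) ≤ l * (C + ε/2) := by
    calc Real.log (f l) ≤ Real.log (Real.exp (l * (C + ε/2))) :=
          (Real.log_le_log_iff hfpos (Real.exp_pos _)).mpr h2
      _ = l * (C + ε/2) := Real.log_exp _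
  rw [Real.dist_eq]
  have hd1 : Real.log (f l) / l ≤ C + ε/2 := by
    rw [div_le_iff₀ hl0]; linarith [mul_comm l (C + ε/2)]
  have hd2 : C - ε/2 ≤ Real.log (f l) / l := by
    rw [le_div_iff₀ hl0]; linarith [mul_comm l (C - ε/2)]
  have habs : |Real.log (f l) / l - C| ≤ ε/2 := abs_le.mpr ⟨by linarith, by linarith⟩
  linarith [abs_nonneg (Real.log (f l) / l - C)]

end HilbertAux

/-- For trace-zero Hermitian matrices `u, v`, the rescaled Hilbert distance satisfies
`lim_{λ → 0⁺} d_H(exp (λ u), exp (λ v)) / λ = λ_max (v - u) - λ_min (v - u)`. -/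
theorem dHilbert_rescaled_limit {n : ℕ} (hn : 0 < n)
    (u v : Matrix (Fin n) (Fin n) ℂ) (hu : u.IsHermitian) (hv : v.IsHermitian)
    (htru : u.trace = 0) (htrv : v.trace = 0) :
    Filter.Tendsto
      (fun l : ℝ => dHilbert (NormedSpace.exp (l • u)) (NormedSpace.exp (l • v)) / l)
      (nhdsWithin 0 (Set.Ioi 0))
      (nhds ((⨆ i, (hv.sub hu).eigenvalues i) - ⨅ i, (hv.sub hu).eigenvalues i)) := by
  classical
  have hNE : Nonempty (Fin n) := ⟨⟨0, hn⟩⟩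
  set a : ℝ := ⨆ i, (hv.sub hu).eigenvalues i with ha
  set b : ℝ := ⨅ i, (hv.sub hu).eigenvalues i with hb
  have hlb1 : ∀ x : Fin n → ℂ, b * (∑ i, Complex.normSq (x i))
      ≤ (star x ⬝ᵥ ((v - u) *ᵥ x)).re :=
    fun x => (HilbertAux.quad_w_bounds (hv.sub hu) hn x).1
  have hub1 : ∀ x : Fin n → ℂ, (star x ⬝ᵥ ((v - u) *ᵥ x)).re
      ≤ a * (∑ i, Complex.normSq (x i)) :=
    fun x => (HilbertAux.quad_w_bounds (hv.sub hu) hn x).2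
  obtain ⟨i₀, hi₀⟩ := exists_eq_ciInf_of_finite (f := (hv.sub hu).eigenvalues)
  obtain ⟨i₁, hi₁⟩ := exists_eq_ciSup_of_finite (f := (hv.sub hu).eigenvalues)
  obtain ⟨x₀, hx₀ne, hx₀eq⟩ := HilbertAux.exists_quad_eq (hv.sub hu) i₀
  obtain ⟨x₁, hx₁ne, hx₁eq⟩ := HilbertAux.exists_quad_eq (hv.sub hu) i₁
  have hwit1 : ∃ x : Fin n → ℂ, x ≠ 0 ∧
      (star x ⬝ᵥ ((v - u) *ᵥ x)).re ≤ b * (∑ i, Complex.normSq (x i)) :=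
    ⟨x₀, hx₀ne, by rw [hx₀eq, hi₀]⟩
  have hneg : ∀ x : Fin n → ℂ,
      star x ⬝ᵥ ((u - v) *ᵥ x) = -(star x ⬝ᵥ ((v - u) *ᵥ x)) := by
    intro x
    rw [← neg_sub v u, Matrix.neg_mulVec, dotProduct_neg]
  have hlb2 : ∀ x : Fin n → ℂ, (-a) * (∑ i, Complex.normSq (x i))
      ≤ (star x ⬝ᵥ ((u - v) *ᵥ x)).re := by
    intro x
    have h := hub1 x
    rw [hneg x, Complex.neg_re]
    linarith
  have hwit2 : ∃ x : Fin n → ℂ, x ≠ 0 ∧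
      (star x ⬝ᵥ ((u - v) *ᵥ x)).re ≤ (-a) * (∑ i, Complex.normSq (x i)) := by
    refine ⟨x₁, hx₁ne, ?_⟩
    rw [hneg x₁, Complex.neg_re, hx₁eq, hi₁]
    exact le_of_eq (by ring)
  have hT1 : Filter.Tendsto
      (fun l : ℝ => Real.log (Mmat (NormedSpace.exp (l • u)) (NormedSpace.exp (l • v))) / l)
      (nhdsWithin 0 (Set.Ioi 0)) (nhds (-b)) := by
    apply HilbertAux.tendsto_log_div_of_sandwich
    intro ε hε
    have := HilbertAux.Mmat_sandwich u v hu hv b hlb1 hwit1 hε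
    filter_upwards [this] with l hl
    refine ⟨?_, ?_⟩
    · have := hl.1; convert this using 3; try ring
    · have := hl.2; convert this using 3; try ring
  have hT2 : Filter.Tendsto
      (fun l : ℝ => Real.log (Mmat (NormedSpace.exp (l • v)) (NormedSpace.exp (l • u))) / l)
      (nhdsWithin 0 (Set.Ioi 0)) (nhds a) := by
    apply HilbertAux.tendsto_log_div_of_sandwich
    intro ε hε
    have := HilbertAux.Mmat_sandwich v u hv hu (-a) hlb2 hwit2 hε
    filter_upwards [this] with l hl
    refine ⟨?_, ?_⟩
    · have := hl.1; convert this using 3; try ring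
    · have := hl.2; convert this using 3; try ring
  have hsum := hT1.add hT2
  have heq : (fun l : ℝ =>
        Real.log (Mmat (NormedSpace.exp (l • u)) (NormedSpace.exp (l • v))) / l
        + Real.log (Mmat (NormedSpace.exp (l • v)) (NormedSpace.exp (l • u))) / l)
      =ᶠ[nhdsWithin (0:ℝ) (Set.Ioi 0)]
      (fun l : ℝ => dHilbert (NormedSpace.exp (l • u)) (NormedSpace.exp (l • v)) / l) := by
    filter_upwards [HilbertAux.Mmat_sandwich u v hu hv b hlb1 hwit1 one_pos,
      HilbertAux.Mmat_sandwich v u hv hu (-a) hlb2 hwit2 one_pos] with l h1 h2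
    have hM1 : 0 < Mmat (NormedSpace.exp (l • u)) (NormedSpace.exp (l • v)) :=
      lt_of_lt_of_le (Real.exp_pos _) h1.1
    have hM2 : 0 < Mmat (NormedSpace.exp (l • v)) (NormedSpace.exp (l • u)) :=
      lt_of_lt_of_le (Real.exp_pos _) h2.1
    rw [dHilbert, Real.log_mul hM1.ne' hM2.ne', add_div]
  have hfinal := hsum.congr' heq
  have hval : -b + a = a - b := by ring
  rw [hval] at hfinal
  exact hfinal
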